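/- Let a > 1, let n ≥ 1, and let A : [0,∞) → ℝ be an on/off process that equals a on a union of n pairwise disjoint on-intervals [s_i, s_i + X_i) ⊆ [0,T] (with X_i > 0) and equals 0 elsewhere on [0,T]. Let Q(t) = sup_{0≤s≤t} ∫_s^t (A(u) − 1) du and suppose Q(T) = 0 (all arriving work is served by time T). Then ∫_0^T Q(t) dt ≥ (a(a−1)/2) · Σ_{i=1}^n X_i². -/

import Mathlib

open MeasureTheory Set

lemma ind_integral (u b c t : ℝ) (hub : u ≤ b) (hbt : b ≤ t) (hbc : b ≤ c) :
    ∫ v in u..t, (Ico b c).indicator (fun _ => (1:ℝ)) v = min c t - b := by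
  have hut : u ≤ t := hub.trans hbt
  rw [intervalIntegral.integral_of_le hut, setIntegral_indicator measurableSet_Ico,
    setIntegral_const]
  have h1 : Ioo b (min c t) ⊆ Ioc u t ∩ Ico b c := by
    intro v hv
    exact ⟨⟨lt_of_le_of_lt hub hv.1, hv.2.le.trans (min_le_right _ _)⟩,
      hv.1.le, hv.2.trans_le (min_le_left _ _)⟩
  have h2 : Ioc u t ∩ Ico b c ⊆ Icc b (min c t) := by
    intro v hv
    exact ⟨hv.2.1, le_min hv.2.2.le hv.1.2⟩
  have hm : volume (Ioc u t ∩ Ico b c) = ENNReal.ofReal (min c t - b) := by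
    have hlo := measure_mono (μ := volume) h1
    have hhi := measure_mono (μ := volume) h2
    rw [Real.volume_Ioo] at hlo
    rw [Real.volume_Icc] at hhi
    exact le_antisymm hhi hlo
  rw [measureReal_def, hm, ENNReal.toReal_ofReal (by simp [hbc, hbt]), smul_eq_mul, mul_one]

lemma ind_intInt (S : Set ℝ) (hS : MeasurableSet S) (c u v : ℝ) :
    IntervalIntegrable (S.indicator (fun _ => c)) volume u v := by
  rw [intervalIntegrable_iff]
  apply MeasureTheory.Integrable.indicator _ hS
  have : IntegrableOn (fun _ => c) (Set.uIoc u v) volume :=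
    integrableOn_const (by rw [Set.uIoc, Real.volume_Ioc]; exact ENNReal.ofReal_ne_top)
  exact this

lemma tri_cont (a X p : ℝ) : Continuous (fun t => max 0 (a * min X (t - p) - (t - p))) := by
  fun_prop

lemma tri_int (a X p T : ℝ) (ha : 1 < a) (hX : 0 < X) (hp : 0 ≤ p) (hpT : p + a * X ≤ T) :
    ∫ t in (0:ℝ)..T, max 0 (a * min X (t - p) - (t - p)) = a * (a - 1) / 2 * X ^ 2 := by
  have ha0 : 0 < a := lt_trans one_pos ha
  have h1 : p + X ≤ p + a * X := by nlinarith
  have hii : ∀ u v : ℝ, IntervalIntegrable (fun t => max 0 (a * min X (t - p) - (t - p))) volume u v :=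
    fun u v => ((tri_cont a X p).continuousOn).intervalIntegrable
  have key : ∫ t in (0:ℝ)..T, max 0 (a * min X (t - p) - (t - p)) =
      (∫ t in (0:ℝ)..p, max 0 (a * min X (t - p) - (t - p))) +
      ((∫ t in p..(p+X), max 0 (a * min X (t - p) - (t - p))) +
       ((∫ t in (p+X)..(p+a*X), max 0 (a * min X (t - p) - (t - p))) +
        (∫ t in (p+a*X)..T, max 0 (a * min X (t - p) - (t - p))))) := by
    rw [intervalIntegral.integral_add_adjacent_intervals (hii _ _) (hii _ _),
      intervalIntegral.integral_add_adjacent_intervals (hii _ _) (hii _ _),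
      intervalIntegral.integral_add_adjacent_intervals (hii _ _) (hii _ _)]
  rw [key]
  have e1 : ∫ t in (0:ℝ)..p, max 0 (a * min X (t - p) - (t - p)) = 0 := by
    rw [intervalIntegral.integral_congr (g := fun _ => (0:ℝ)), intervalIntegral.integral_zero]
    intro t ht
    rw [uIcc_of_le hp] at ht
    have htp : t - p ≤ 0 := by linarith [ht.2]
    dsimp only
    rw [min_eq_right (by linarith), max_eq_left (by nlinarith)]
  have e2 : ∫ t in p..(p+X), max 0 (a * min X (t - p) - (t - p)) = (a - 1) * X ^ 2 / 2 := by
    rw [intervalIntegral.integral_congr (g := fun t => (a - 1) * (t - p))]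
    · rw [intervalIntegral.integral_const_mul, intervalIntegral.integral_comp_sub_right (fun x => x) p]
      simp [integral_id]
      ring
    · intro t ht
      rw [uIcc_of_le (by linarith : p ≤ p + X)] at ht
      have h1' : p ≤ t := ht.1
      have h2' : t ≤ p + X := ht.2
      dsimp only
      rw [min_eq_right (by linarith), max_eq_right (by nlinarith)]
      ring
  have e3 : ∫ t in (p+X)..(p+a*X), max 0 (a * min X (t - p) - (t - p)) = (a-1)^2 * X ^ 2 / 2 := by
    rw [intervalIntegral.integral_congr (g := fun t => a * X - (t - p))]
    · rw [intervalIntegral.integral_sub intervalIntegrable_const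
        (by apply ContinuousOn.intervalIntegrable; fun_prop),
        intervalIntegral.integral_const, intervalIntegral.integral_comp_sub_right (fun x => x) p]
      simp [integral_id]
      ring
    · intro t ht
      rw [uIcc_of_le h1] at ht
      have h1' : p + X ≤ t := ht.1
      have h2' : t ≤ p + a * X := ht.2
      dsimp only
      rw [min_eq_left (by linarith), max_eq_right (by nlinarith)]
  have e4 : ∫ t in (p+a*X)..T, max 0 (a * min X (t - p) - (t - p)) = 0 := by
    rw [intervalIntegral.integral_congr (g := fun _ => (0:ℝ)), intervalIntegral.integral_zero]
    intro t ht
    rw [uIcc_of_le hpT] at ht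
    have h1' : p + a * X ≤ t := ht.1
    dsimp only
    rw [min_eq_left (by nlinarith), max_eq_left (by nlinarith)]
  rw [e1, e2, e3, e4]
  ring

set_option maxHeartbeats 1000000 in
/-- an on/off process equal to `a > 1` on `n ≥ 1` pairwise disjoint
on-intervals `[sᵢ, sᵢ + Xᵢ) ⊆ [0,T]` and `0` elsewhere on `[0,T]`, with queue
`Q t = sup_{0 ≤ s ≤ t} ∫_s^t (A u - 1) du`.  If the queue is empty at time `T`,
then `∫_0^T Q ≥ (a(a-1)/2) Σ Xᵢ²`. -/
theorem stmt_1 (a T : ℝ) (ha : 1 < a) (n : ℕ) (hn : 1 ≤ n)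
    (s X : Fin n → ℝ) (hX : ∀ i, 0 < X i)
    (hsub : ∀ i, Set.Ico (s i) (s i + X i) ⊆ Set.Icc 0 T)
    (hdisj : ∀ i j, i ≠ j →
      Disjoint (Set.Ico (s i) (s i + X i)) (Set.Ico (s j) (s j + X j)))
    (A : ℝ → ℝ)
    (hAon : ∀ t ∈ Set.Icc (0:ℝ) T,
      (∃ i, t ∈ Set.Ico (s i) (s i + X i)) → A t = a)
    (hAoff : ∀ t ∈ Set.Icc (0:ℝ) T,
      (¬ ∃ i, t ∈ Set.Ico (s i) (s i + X i)) → A t = 0)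
    (Q : ℝ → ℝ)
    (hQ : ∀ t, Q t = ⨆ u : Set.Icc (0:ℝ) t, ∫ v in (u : ℝ)..t, (A v - 1))
    (hQT : Q T = 0) :
    ∫ t in (0:ℝ)..T, Q t ≥ (a * (a - 1) / 2) * ∑ i, (X i) ^ 2 := by
  have ha0 : (0:ℝ) < a := lt_trans one_pos ha
  -- basic facts about the intervals
  have hs0 : ∀ i, 0 ≤ s i := fun i =>
    ((hsub i) ⟨le_refl _, lt_add_of_pos_right _ (hX i)⟩).1
  have hsiT : ∀ i, s i ≤ T := fun i =>
    ((hsub i) ⟨le_refl _, lt_add_of_pos_right _ (hX i)⟩).2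
  have hsXT : ∀ i, s i + X i ≤ T := by
    intro i
    by_contra hc
    push_neg at hc
    set v := (max (s i) T + (s i + X i)) / 2 with hv
    have h1 : max (s i) T < s i + X i := max_lt (lt_add_of_pos_right _ (hX i)) hc
    have h2 : max (s i) T < v := by rw [hv]; linarith
    have h3 : v < s i + X i := by rw [hv]; linarith
    have h4 : s i ≤ v := le_trans (le_max_left _ _) h2.le
    have h5 : T < v := lt_of_le_of_lt (le_max_right _ _) h2
    exact absurd ((hsub i ⟨h4, h3⟩).2) (not_le.2 h5)
  have h0T : (0:ℝ) ≤ T := le_trans (hs0 ⟨0, hn⟩) (hsiT ⟨0, hn⟩)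
  -- the measurable model of A
  set U : Set ℝ := ⋃ i, Ico (s i) (s i + X i) with hU
  have hUmeas : MeasurableSet U := MeasurableSet.iUnion (fun i => measurableSet_Ico)
  set g : ℝ → ℝ := U.indicator (fun _ => a) with hgdef
  have hAg : ∀ v ∈ Icc (0:ℝ) T, A v = g v := by
    intro v hv
    by_cases hmem : v ∈ U
    · rw [hgdef, indicator_of_mem hmem]
      exact hAon v hv (mem_iUnion.1 hmem)
    · rw [hgdef, indicator_of_notMem hmem]
      exact hAoff v hv (fun h => hmem (mem_iUnion.2 h))
  have hg_nonneg : ∀ v, 0 ≤ g v := by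
    intro v
    rw [hgdef]
    exact indicator_nonneg (fun _ _ => ha0.le) v
  have hg_le : ∀ v, g v ≤ a := by
    intro v
    rw [hgdef]
    exact indicator_le' (fun _ _ => le_refl a) (fun _ _ => ha0.le) v
  have hgint : ∀ u v : ℝ, IntervalIntegrable (fun x => g x - 1) volume u v := by
    intro u v
    exact (ind_intInt U hUmeas a u v).sub intervalIntegrable_const
  -- interval integrability of A - 1 on subintervals of [0,T]
  have hAint : ∀ u v : ℝ, u ∈ Icc (0:ℝ) T → v ∈ Icc (0:ℝ) T →
      IntervalIntegrable (fun x => A x - 1) volume u v := by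
    intro u v hu hv
    rw [intervalIntegrable_iff]
    refine ((intervalIntegrable_iff).1 (hgint u v)).congr_fun ?_ measurableSet_uIoc
    intro x hx
    have hx' : x ∈ Icc (0:ℝ) T := by
      rcases uIoc_subset_uIcc hx with h
      rw [uIcc_eq_union] at h
      rcases h with h | h
      · exact ⟨le_trans hu.1 h.1, le_trans h.2 hv.2⟩
      · exact ⟨le_trans hv.1 h.1, le_trans h.2 hu.2⟩
    dsimp only
    rw [hAg x hx']
  -- rewriting interval integrals of A - 1 through g
  have hAg_int : ∀ u v : ℝ, u ∈ Icc (0:ℝ) T → v ∈ Icc (0:ℝ) T →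
      ∫ x in u..v, (A x - 1) = ∫ x in u..v, (g x - 1) := by
    intro u v hu hv
    apply intervalIntegral.integral_congr
    intro x hx
    rw [uIcc_eq_union] at hx
    have hx' : x ∈ Icc (0:ℝ) T := by
      rcases hx with h | h
      · exact ⟨le_trans hu.1 h.1, le_trans h.2 hv.2⟩
      · exact ⟨le_trans hv.1 h.1, le_trans h.2 hu.2⟩
    dsimp only
    rw [hAg x hx']
  -- upper and lower bounds for the integral of g - 1
  have hub : ∀ u v : ℝ, u ≤ v → ∫ x in u..v, (g x - 1) ≤ (a - 1) * (v - u) := by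
    intro u v huv
    have := intervalIntegral.integral_mono_on (μ := volume) huv (hgint u v)
      intervalIntegrable_const (g := fun _ => a - 1) (fun x _ => by linarith [hg_le x])
    rw [intervalIntegral.integral_const] at this
    rw [smul_eq_mul, mul_comm] at this
    linarith
  have hlb : ∀ u v : ℝ, u ≤ v → -(v - u) ≤ ∫ x in u..v, (g x - 1) := by
    intro u v huv
    have := intervalIntegral.integral_mono_on (μ := volume) huv
      intervalIntegrable_const (hgint u v) (f := fun _ => (-1:ℝ)) (fun x _ => by linarith [hg_nonneg x])
    rw [intervalIntegral.integral_const] at this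
    rw [smul_eq_mul] at this
    linarith
  -- boundedness of the sup family
  have hbdd : ∀ t ∈ Icc (0:ℝ) T,
      BddAbove (range fun u : Icc (0:ℝ) t => ∫ v in (u:ℝ)..t, (A v - 1)) := by
    intro t ht
    refine ⟨(a - 1) * t, ?_⟩
    rintro x ⟨u, rfl⟩
    have hu : (u:ℝ) ∈ Icc (0:ℝ) T := ⟨u.2.1, le_trans u.2.2 ht.2⟩
    dsimp only
    rw [hAg_int u t hu ht]
    calc ∫ x in (u:ℝ)..t, (g x - 1) ≤ (a - 1) * (t - u) := hub u t u.2.2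
    _ ≤ (a - 1) * t := by nlinarith [u.2.1, sub_nonneg.2 (ha.le)]
  have hne : ∀ t : ℝ, 0 ≤ t → Nonempty (Icc (0:ℝ) t) := by
    intro t ht
    exact ⟨⟨0, le_refl _, ht⟩⟩
  -- nonnegativity of Q on [0,T]
  have hQ0 : ∀ t ∈ Icc (0:ℝ) T, 0 ≤ Q t := by
    intro t ht
    rw [hQ t]
    have hle := le_ciSup (hbdd t ht) ⟨t, ht.1, le_refl t⟩
    simp only [intervalIntegral.integral_same] at hle
    exact hle
  -- the Lipschitz property of Q on [0,T]
  have hkey : ∀ t₁ t₂ : ℝ, t₁ ∈ Icc (0:ℝ) T → t₂ ∈ Icc (0:ℝ) T → t₁ ≤ t₂ →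
      Q t₂ ≤ Q t₁ + a * (t₂ - t₁) ∧ Q t₁ ≤ Q t₂ + a * (t₂ - t₁) := by
    intro t₁ t₂ h1 h2 h12
    have hI := hAint t₁ t₂ h1 h2
    have hQ1 := hQ0 t₁ h1
    have hseg_ub : ∫ x in t₁..t₂, (A x - 1) ≤ (a - 1) * (t₂ - t₁) := by
      rw [hAg_int t₁ t₂ h1 h2]; exact hub t₁ t₂ h12
    have hseg_lb : -(t₂ - t₁) ≤ ∫ x in t₁..t₂, (A x - 1) := by
      rw [hAg_int t₁ t₂ h1 h2]; exact hlb t₁ t₂ h12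
    constructor
    · rw [hQ t₂]
      haveI := hne t₂ h2.1
      apply ciSup_le
      intro u
      by_cases hu : (u:ℝ) ≤ t₁
      · have hu1 : (u:ℝ) ∈ Icc (0:ℝ) T := ⟨u.2.1, le_trans u.2.2 h2.2⟩
        have hadd := intervalIntegral.integral_add_adjacent_intervals
          (hAint u t₁ hu1 h1) hI
        have hu_le : ∫ x in (u:ℝ)..t₁, (A x - 1) ≤ Q t₁ := by
          rw [hQ t₁]
          exact le_ciSup (hbdd t₁ h1) ⟨u, u.2.1, hu⟩
        rw [← hadd]
        nlinarith [sub_nonneg.2 h12]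
      · push_neg at hu
        have hu2 : (u:ℝ) ∈ Icc (0:ℝ) T := ⟨u.2.1, le_trans u.2.2 h2.2⟩
        have : ∫ x in (u:ℝ)..t₂, (A x - 1) ≤ (a - 1) * (t₂ - u) := by
          rw [hAg_int u t₂ hu2 h2]; exact hub u t₂ u.2.2
        nlinarith [u.2.2, sub_nonneg.2 h12, sub_nonneg.2 hu.le]
    · rw [hQ t₁]
      haveI := hne t₁ h1.1
      apply ciSup_le
      intro u
      have hu1 : (u:ℝ) ∈ Icc (0:ℝ) T := ⟨u.2.1, le_trans u.2.2 h1.2⟩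
      have hadd := intervalIntegral.integral_add_adjacent_intervals
        (hAint u t₁ hu1 h1) hI
      have hu_le : ∫ x in (u:ℝ)..t₂, (A x - 1) ≤ Q t₂ := by
        rw [hQ t₂]
        exact le_ciSup (hbdd t₂ h2) ⟨u, u.2.1, le_trans u.2.2 h12⟩
      have : ∫ x in (u:ℝ)..t₁, (A x - 1)
          = (∫ x in (u:ℝ)..t₂, (A x - 1)) - ∫ x in t₁..t₂, (A x - 1) := by
        rw [← hadd]; ring
      rw [this]
      nlinarith [sub_nonneg.2 h12, sub_nonneg.2 ha.le]
  have hQcont : ContinuousOn Q (Icc (0:ℝ) T) := by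
    apply LipschitzOnWith.continuousOn (K := Real.toNNReal a)
    rw [lipschitzOnWith_iff_dist_le_mul]
    intro x hx y hy
    rw [Real.dist_eq, Real.dist_eq, Real.coe_toNNReal a ha0.le]
    rcases le_total x y with h | h
    · have := hkey x y hx hy h
      rw [abs_sub_le_iff, abs_of_nonpos (by linarith)]
      constructor <;> linarith [this.1, this.2]
    · have := hkey y x hy hx h
      rw [abs_sub_le_iff, abs_of_nonneg (by linarith)]
      constructor <;> linarith [this.1, this.2]
  have hQint : IntervalIntegrable Q volume 0 T := by
    apply ContinuousOn.intervalIntegrable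
    rwa [uIcc_of_le h0T]
  -- the pointwise lower bound Σ fᵢ ≤ Q on [0,T]
  have hpt : ∀ t ∈ Icc (0:ℝ) T,
      (∑ i, max 0 (a * min (X i) (t - s i) - (t - s i))) ≤ Q t := by
    intro t ht
    classical
    set Sf : Finset (Fin n) :=
      Finset.univ.filter (fun i => 0 < a * min (X i) (t - s i) - (t - s i)) with hSf
    have hsum_eq : (∑ i, max 0 (a * min (X i) (t - s i) - (t - s i)))
        = ∑ i ∈ Sf, (a * min (X i) (t - s i) - (t - s i)) := by
      rw [← Finset.sum_filter_add_sum_filter_not Finset.univ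
        (fun i => 0 < a * min (X i) (t - s i) - (t - s i))
        (fun i => max 0 (a * min (X i) (t - s i) - (t - s i)))]
      have h2 : ∑ i ∈ Finset.univ.filter
          (fun i => ¬ 0 < a * min (X i) (t - s i) - (t - s i)),
          max 0 (a * min (X i) (t - s i) - (t - s i)) = 0 := by
        apply Finset.sum_eq_zero
        intro i hi
        rw [Finset.mem_filter] at hi
        exact max_eq_left (not_lt.1 hi.2)
      have h1 : ∑ i ∈ Sf, max 0 (a * min (X i) (t - s i) - (t - s i))
          = ∑ i ∈ Sf, (a * min (X i) (t - s i) - (t - s i)) := by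
        apply Finset.sum_congr rfl
        intro i hi
        rw [hSf, Finset.mem_filter] at hi
        exact max_eq_right hi.2.le
      rw [h1, h2, add_zero]
    rw [hsum_eq]
    rcases Finset.eq_empty_or_nonempty Sf with hemp | hnemp
    · rw [hemp, Finset.sum_empty]
      exact hQ0 t ht
    · -- members of Sf start strictly before t
      have hslt : ∀ i ∈ Sf, s i < t := by
        intro i hi
        rw [hSf, Finset.mem_filter] at hi
        by_contra hc
        push_neg at hc
        have h1 : t - s i ≤ 0 := by linarith
        rw [min_eq_right (by linarith [hX i])] at hi
        nlinarith [hi.2]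
      obtain ⟨i0, hi0S, hmin⟩ := Finset.exists_min_image Sf s hnemp
      have hi0t : s i0 ∈ Icc (0:ℝ) t := ⟨hs0 i0, (hslt i0 hi0S).le⟩
      have hi0T : s i0 ∈ Icc (0:ℝ) T := ⟨hs0 i0, hsiT i0⟩
      have htT : t ∈ Icc (0:ℝ) T := ht
      -- Q t is at least the integral from s i0
      have hQt : ∫ x in (s i0)..t, (g x - 1) ≤ Q t := by
        rw [hQ t, ← hAg_int (s i0) t hi0T htT]
        exact le_ciSup (hbdd t ht) ⟨s i0, hi0t⟩
      -- split off the constant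
      have hsplit : ∫ x in (s i0)..t, (g x - 1)
          = (∫ x in (s i0)..t, g x) - (t - s i0) := by
        have hgI : IntervalIntegrable g volume (s i0) t :=
          ind_intInt U hUmeas a (s i0) t
        have := intervalIntegral.integral_sub hgI
          (intervalIntegrable_const (c := (1:ℝ)))
        simpa using this
      -- the sum-of-indicators minorant
      set h : ℝ → ℝ :=
        fun v => ∑ i ∈ Sf, a * (Ico (s i) (s i + X i)).indicator (fun _ => (1:ℝ)) v
        with hhdef
      have hhg : ∀ v, h v ≤ g v := by
        intro v
        by_cases hv : ∃ j ∈ Sf, v ∈ Ico (s j) (s j + X j)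
        · obtain ⟨j, hjS, hjv⟩ := hv
          have : h v = a := by
            simp only [hhdef]
            rw [Finset.sum_eq_single_of_mem j hjS]
            · rw [indicator_of_mem hjv]; simp
            · intro i hiS hij
              have : v ∉ Ico (s i) (s i + X i) := by
                intro hvi
                exact (hdisj i j hij).ne_of_mem hvi hjv rfl
              rw [indicator_of_notMem this, mul_zero]
          rw [this, hgdef, indicator_of_mem (mem_iUnion.2 ⟨j, hjv⟩)]
        · push_neg at hv
          have : h v = 0 := by
            simp only [hhdef]
            apply Finset.sum_eq_zero
            intro i hi
            rw [indicator_of_notMem (hv i hi), mul_zero]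
          rw [this]
          exact hg_nonneg v
      have hhI : IntervalIntegrable h volume (s i0) t := by
        simp only [hhdef]
        have := IntervalIntegrable.sum (μ := volume) (a := s i0) (b := t)
          (f := fun i w => a * (Ico (s i) (s i + X i)).indicator (fun _ => (1:ℝ)) w)
          Sf (fun i _ => (ind_intInt _ measurableSet_Ico 1 _ _).const_mul a)
        simpa [Finset.sum_fn] using this
      have hgI : IntervalIntegrable g volume (s i0) t :=
        ind_intInt U hUmeas a (s i0) t
      have hmono : ∫ x in (s i0)..t, h x ≤ ∫ x in (s i0)..t, g x :=
        intervalIntegral.integral_mono_on hi0t.2 hhI hgI (fun x _ => hhg x)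
      -- compute the integral of h
      have hhval : ∫ x in (s i0)..t, h x
          = ∑ i ∈ Sf, a * (min (X i) (t - s i)) := by
        simp only [hhdef]
        rw [intervalIntegral.integral_finset_sum
          (fun i _ => (ind_intInt _ measurableSet_Ico 1 _ _).const_mul a)]
        apply Finset.sum_congr rfl
        intro i hi
        rw [intervalIntegral.integral_const_mul,
          ind_integral (s i0) (s i) (s i + X i) t (hmin i hi) (hslt i hi).le
            (by linarith [hX i])]
        congr 1
        rcases le_total (s i + X i) t with hc | hc
        · rw [min_eq_left hc, min_eq_left (by linarith)]
          ring
        · rw [min_eq_right hc, min_eq_right (by linarith)]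
      -- the correction term
      have hcorr : t - s i0 ≤ ∑ i ∈ Sf, (t - s i) := by
        have := Finset.single_le_sum (f := fun i => t - s i)
          (fun i hi => by linarith [hslt i hi]) hi0S
        exact this
      have hfinal : ∑ i ∈ Sf, (a * min (X i) (t - s i) - (t - s i))
          ≤ ∫ x in (s i0)..t, (g x - 1) := by
        rw [hsplit, Finset.sum_sub_distrib]
        have h1 : ∑ i ∈ Sf, a * min (X i) (t - s i) ≤ ∫ x in (s i0)..t, g x := by
          rw [← hhval]; exact hmono
        linarith
      linarith
  -- each triangle fits inside [0,T]
  have hfit : ∀ i, s i + a * X i ≤ T := by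
    have hTpt := hpt T ⟨h0T, le_refl T⟩
    rw [hQT] at hTpt
    have hzero : ∀ i, max 0 (a * min (X i) (T - s i) - (T - s i)) = 0 := by
      intro i
      have hnn : ∀ j ∈ Finset.univ,
          (0:ℝ) ≤ max 0 (a * min (X j) (T - s j) - (T - s j)) :=
        fun j _ => le_max_left _ _
      have hsum0 : ∑ j, max 0 (a * min (X j) (T - s j) - (T - s j)) = 0 :=
        le_antisymm hTpt (Finset.sum_nonneg hnn)
      exact (Finset.sum_eq_zero_iff_of_nonneg hnn).1 hsum0 i (Finset.mem_univ i)
    intro i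
    have h1 := hzero i
    have h2 : min (X i) (T - s i) = X i := min_eq_left (by linarith [hsXT i])
    rw [h2] at h1
    have h3 : a * X i - (T - s i) ≤ 0 := by
      by_contra hc
      push_neg at hc
      rw [max_eq_right hc.le] at h1
      linarith
    linarith
  -- put everything together
  have hFint : IntervalIntegrable
      (fun t => ∑ i, max 0 (a * min (X i) (t - s i) - (t - s i))) volume 0 T := by
    apply ContinuousOn.intervalIntegrable
    apply Continuous.continuousOn
    exact continuous_finset_sum _ (fun i _ => tri_cont a (X i) (s i))
  have hmono := intervalIntegral.integral_mono_on h0T hFint hQint hpt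
  have hsum : ∫ t in (0:ℝ)..T, ∑ i, max 0 (a * min (X i) (t - s i) - (t - s i))
      = ∑ i, ∫ t in (0:ℝ)..T, max 0 (a * min (X i) (t - s i) - (t - s i)) :=
    intervalIntegral.integral_finset_sum
      (fun i _ => ((tri_cont a (X i) (s i)).continuousOn).intervalIntegrable)
  have hval : ∑ i, ∫ t in (0:ℝ)..T, max 0 (a * min (X i) (t - s i) - (t - s i))
      = ∑ i, a * (a - 1) / 2 * (X i) ^ 2 :=
    Finset.sum_congr rfl (fun i _ => tri_int a (X i) (s i) T ha (hX i) (hs0 i) (hfit i))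
  rw [ge_iff_le, Finset.mul_sum]
  calc ∑ i, a * (a - 1) / 2 * (X i) ^ 2
      = ∫ t in (0:ℝ)..T, ∑ i, max 0 (a * min (X i) (t - s i) - (t - s i)) := by
        rw [hsum, hval]
    _ ≤ ∫ t in (0:ℝ)..T, Q t := hmono
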